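/- For every n ≥ 1 there is a polynomial q_n ∈ ℚ[X] of degree n + 2 with q_n(k) = p_n(k) for all positive integers k, and q_n satisfies q_n(-X) = (-1)^n q_n(X), where p_n(k) = ∑_{j=1}^{k} j^{n+1} + ∑_{j=k+1}^{2k} (2k - j) j^n. -/

import Mathlib

open Polynomial

/-- The power sum `p_n(k) = ∑_{j=1}^{k} j^{n+1} + ∑_{j=k+1}^{2k} (2k - j) j^n`. -/
def powerSum (n k : ℕ) : ℚ :=
  (∑ j ∈ Finset.Icc 1 k, (j : ℚ) ^ (n + 1)) +
    ∑ j ∈ Finset.Icc (k + 1) (2 * k), ((2 * k : ℚ) - j) * (j : ℚ) ^ n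

section AuxStmt11
open Finset

noncomputable def Fp (m : ℕ) : ℚ[X] :=
  C ((m + 1 : ℚ)⁻¹) * (Polynomial.bernoulli (m + 1) - C (_root_.bernoulli (m + 1)))

lemma Fp_eval_nat (m k : ℕ) :
    (Fp m).eval (k : ℚ) = ∑ j ∈ range k, (j : ℚ) ^ m := by
  have h := Polynomial.bernoulli_succ_eval k m
  have hm : ((m : ℚ) + 1) ≠ 0 := by positivity
  simp only [Fp, eval_mul, eval_C, eval_sub, Nat.succ_eq_add_one] at *
  rw [h]
  push_cast
  field_simp
  ring

lemma Fp_step (m : ℕ) (x : ℚ) : (Fp m).eval (1 + x) = (Fp m).eval x + x ^ m := by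
  have h := Polynomial.bernoulli_eval_one_add (m + 1) x
  have hm : ((m : ℚ) + 1) ≠ 0 := by positivity
  simp only [Fp, eval_mul, eval_C, eval_sub, Nat.add_sub_cancel] at *
  rw [h]
  push_cast
  field_simp
  ring

lemma Fp_eval_neg (m k : ℕ) :
    (Fp m).eval (-(k : ℚ)) = -∑ j ∈ range k, (-((j : ℚ) + 1)) ^ m := by
  induction k with
  | zero => simpa using Fp_eval_nat m 0
  | succ k ih =>
    have h := Fp_step m (-((k : ℚ) + 1))
    have : (1 : ℚ) + -((k : ℚ) + 1) = -(k : ℚ) := by ring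
    rw [this, ih] at h
    push_cast
    rw [show -((k : ℚ) + 1) = -(↑k + 1) by ring] at h ⊢
    rw [sum_range_succ]
    push_cast
    linarith [h]

lemma bern_coeff_high (n k : ℕ) (h : n < k) : (Polynomial.bernoulli n).coeff k = 0 := by
  rw [Polynomial.bernoulli_def, finset_sum_coeff]
  refine Finset.sum_eq_zero fun i hi => ?_
  simp only [Finset.mem_range] at hi
  rw [Polynomial.coeff_monomial, if_neg (by omega)]

lemma bern_coeff_self (n : ℕ) : (Polynomial.bernoulli n).coeff n = 1 := by
  rw [Polynomial.bernoulli_def, finset_sum_coeff]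
  rw [Finset.sum_eq_single n]
  · simp
  · intro i hi hi0
    rw [Polynomial.coeff_monomial, if_neg (by omega)]
  · simp

lemma Fp_coeff_top (m : ℕ) : (Fp m).coeff (m + 1) = ((m : ℚ) + 1)⁻¹ := by
  simp [Fp, coeff_C_mul, coeff_sub, bern_coeff_self, coeff_C]

lemma Fp_coeff_high (m k : ℕ) (h : m + 1 < k) : (Fp m).coeff k = 0 := by
  simp only [Fp, coeff_C_mul, coeff_sub, bern_coeff_high _ _ h, coeff_C]
  rw [if_neg (by omega)]
  ring

lemma Fp_natDegree (m : ℕ) : (Fp m).natDegree = m + 1 := by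
  apply le_antisymm
  · rw [Polynomial.natDegree_le_iff_coeff_eq_zero]
    exact fun k hk => Fp_coeff_high m k hk
  · apply Polynomial.le_natDegree_of_ne_zero
    rw [Fp_coeff_top]
    positivity

lemma Fp_leadingCoeff (m : ℕ) : (Fp m).leadingCoeff = ((m : ℚ) + 1)⁻¹ := by
  rw [Polynomial.leadingCoeff, Fp_natDegree, Fp_coeff_top]

noncomputable def Qp (n : ℕ) : ℚ[X] :=
  C 2 * (Fp (n + 1)).comp (C 1 * X + C 1)
    + (C 2 * X) * ((Fp n).comp (C 2 * X + C 1) - (Fp n).comp (C 1 * X + C 1))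
    - (Fp (n + 1)).comp (C 2 * X + C 1)

lemma Qp_eval (n k : ℕ) :
    (Qp n).eval (k : ℚ) =
      2 * (∑ j ∈ range (k + 1), (j : ℚ) ^ (n + 1))
        + 2 * (k : ℚ) * ((∑ j ∈ range (2 * k + 1), (j : ℚ) ^ n)
            - ∑ j ∈ range (k + 1), (j : ℚ) ^ n)
        - ∑ j ∈ range (2 * k + 1), (j : ℚ) ^ (n + 1) := by
  have c1 : (1 : ℚ) * (k : ℚ) + 1 = ((k + 1 : ℕ) : ℚ) := by push_cast; ring
  have c2 : (2 : ℚ) * (k : ℚ) + 1 = ((2 * k + 1 : ℕ) : ℚ) := by push_cast; ring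
  simp only [Qp, eval_sub, eval_add, eval_mul, eval_comp, eval_C, eval_X, c1, c2,
    Fp_eval_nat]

lemma sum_eq_powerSum (n k : ℕ) (hn : 1 ≤ n) :
    2 * (∑ j ∈ range (k + 1), (j : ℚ) ^ (n + 1))
      + 2 * (k : ℚ) * ((∑ j ∈ range (2 * k + 1), (j : ℚ) ^ n)
          - ∑ j ∈ range (k + 1), (j : ℚ) ^ n)
      - ∑ j ∈ range (2 * k + 1), (j : ℚ) ^ (n + 1) = powerSum n k := by
  have expand : ∀ t : ℕ, ∑ j ∈ range t, ((2 * k : ℚ) - j) * (j : ℚ) ^ n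
      = 2 * (k : ℚ) * (∑ j ∈ range t, (j : ℚ) ^ n) - ∑ j ∈ range t, (j : ℚ) ^ (n + 1) := by
    intro t
    rw [Finset.mul_sum, ← Finset.sum_sub_distrib]
    exact Finset.sum_congr rfl fun j _ => by push_cast; ring
  rw [powerSum, ← Finset.Ico_add_one_right_eq_Icc 1 k, ← Finset.Ico_add_one_right_eq_Icc (k + 1) (2 * k),
    Finset.sum_Ico_eq_sub _ (by omega : 1 ≤ k + 1),
    Finset.sum_Ico_eq_sub _ (by omega : k + 1 ≤ 2 * k + 1),
    expand, expand]
  have h0 : ∑ j ∈ range 1, (j : ℚ) ^ (n + 1) = 0 := by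
    simp
  rw [h0]
  have h1 : ∑ j ∈ range 1, (j : ℚ) ^ n = 0 := by
    simp [zero_pow (by omega : n ≠ 0)]
  ring

lemma lin_natDegree (a : ℚ) (ha : a ≠ 0) : (C a * X + C 1 : ℚ[X]).natDegree = 1 :=
  natDegree_linear ha

lemma comp_coeff_top (m : ℕ) (a : ℚ) (ha : a ≠ 0) :
    ((Fp m).comp (C a * X + C 1)).coeff (m + 1) = ((m : ℚ) + 1)⁻¹ * a ^ (m + 1) := by
  have h := Polynomial.coeff_comp_degree_mul_degree
    (p := Fp m) (q := C a * X + C 1) (by rw [lin_natDegree a ha]; omega)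
  rw [Fp_natDegree, lin_natDegree a ha, mul_one, Fp_leadingCoeff, leadingCoeff_linear ha] at h
  rw [h]

lemma comp_natDegree (m : ℕ) (a : ℚ) (ha : a ≠ 0) :
    ((Fp m).comp (C a * X + C 1)).natDegree = m + 1 := by
  rw [Polynomial.natDegree_comp, Fp_natDegree, lin_natDegree a ha, mul_one]

lemma Qp_coeff_top (n : ℕ) :
    (Qp n).coeff (n + 2) = ((2 : ℚ) ^ (n + 2) - 2) * (((n : ℚ) + 1)⁻¹ - ((n : ℚ) + 2)⁻¹) := by
  have h1 : ((Fp (n + 1)).comp (C 1 * X + C 1)).coeff (n + 2)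
      = ((n : ℚ) + 2)⁻¹ := by
    have := comp_coeff_top (n + 1) 1 one_ne_zero
    rw [this]; push_cast; ring
  have h2 : ((Fp (n + 1)).comp (C 2 * X + C 1)).coeff (n + 2)
      = ((n : ℚ) + 2)⁻¹ * 2 ^ (n + 2) := by
    have := comp_coeff_top (n + 1) 2 two_ne_zero
    rw [this]; push_cast; ring
  have h3 : ((Fp n).comp (C 2 * X + C 1)).coeff (n + 1) = ((n : ℚ) + 1)⁻¹ * 2 ^ (n + 1) :=
    comp_coeff_top n 2 two_ne_zero
  have h4 : ((Fp n).comp (C 1 * X + C 1)).coeff (n + 1) = ((n : ℚ) + 1)⁻¹ := by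
    rw [comp_coeff_top n 1 one_ne_zero, one_pow, mul_one]
  have hmul : ((C 2 * X : ℚ[X]) * ((Fp n).comp (C 2 * X + C 1)
        - (Fp n).comp (C 1 * X + C 1))).coeff (n + 2)
      = 2 * (((Fp n).comp (C 2 * X + C 1) - (Fp n).comp (C 1 * X + C 1)).coeff (n + 1)) := by
    rw [mul_assoc, coeff_C_mul, coeff_X_mul]
  rw [Qp, coeff_sub, coeff_add, coeff_C_mul, h1, h2, hmul, coeff_sub, h3, h4]
  have hn1 : ((n : ℚ) + 1) ≠ 0 := by positivity
  have hn2 : ((n : ℚ) + 2) ≠ 0 := by positivity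
  field_simp
  ring

lemma Qp_coeff_top_ne (n : ℕ) (hn : 1 ≤ n) : (Qp n).coeff (n + 2) ≠ 0 := by
  rw [Qp_coeff_top]
  have h1 : (2 : ℚ) ^ 2 ≤ 2 ^ (n + 2) := pow_le_pow_right₀ (by norm_num) (by omega)
  have h2 : (0 : ℚ) < 2 ^ (n + 2) - 2 := by nlinarith
  have h3 : ((n : ℚ) + 2)⁻¹ < ((n : ℚ) + 1)⁻¹ := by
    apply inv_strictAnti₀ (by positivity) (by linarith)
  have : (0:ℚ) < ((n : ℚ) + 1)⁻¹ - ((n : ℚ) + 2)⁻¹ := by linarith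
  positivity

lemma Qp_natDegree_le (n : ℕ) : (Qp n).natDegree ≤ n + 2 := by
  apply le_trans (natDegree_sub_le _ _)
  apply max_le
  · apply le_trans (natDegree_add_le _ _)
    apply max_le
    · apply le_trans (natDegree_mul_le)
      rw [natDegree_C, comp_natDegree (n + 1) 1 one_ne_zero]
      omega
    · apply le_trans (natDegree_mul_le)
      have : ((Fp n).comp (C 2 * X + C 1) - (Fp n).comp (C 1 * X + C 1)).natDegree ≤ n + 1 := by
        apply le_trans (natDegree_sub_le _ _)
        rw [comp_natDegree n 2 two_ne_zero, comp_natDegree n 1 one_ne_zero]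
        omega
      have h2 : (C 2 * X : ℚ[X]).natDegree ≤ 1 := by
        apply le_trans (natDegree_mul_le)
        simp
      omega
  · rw [comp_natDegree (n + 1) 2 two_ne_zero]

lemma Qp_natDegree (n : ℕ) (hn : 1 ≤ n) : (Qp n).natDegree = n + 2 :=
  le_antisymm (Qp_natDegree_le n) (le_natDegree_of_ne_zero (Qp_coeff_top_ne n hn))

lemma Fp_eval_neg' (m t : ℕ) :
    (Fp m).eval (-(t : ℚ)) = -(-1 : ℚ) ^ m * ∑ j ∈ range t, ((j : ℚ) + 1) ^ m := by
  rw [Fp_eval_neg, Finset.mul_sum, ← Finset.sum_neg_distrib]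
  exact Finset.sum_congr rfl fun j _ => by rw [neg_pow]; ring

lemma Fp_eval_pos' (m t : ℕ) (hm : 1 ≤ m) :
    (Fp m).eval ((t : ℚ) + 1) = ∑ j ∈ range t, ((j : ℚ) + 1) ^ m := by
  have : ((t : ℚ) + 1) = ((t + 1 : ℕ) : ℚ) := by push_cast; ring
  rw [this, Fp_eval_nat, Finset.sum_range_succ']
  simp [zero_pow (by omega : m ≠ 0)]

lemma Qp_eval_neg (n k : ℕ) (hn : 1 ≤ n) :
    (Qp n).eval (-((k : ℚ) + 1)) = (-1 : ℚ) ^ n * (Qp n).eval ((k : ℚ) + 1) := by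
  have e1 : (1 : ℚ) * (-((k : ℚ) + 1)) + 1 = -((k : ℕ) : ℚ) := by push_cast; ring
  have e2 : (2 : ℚ) * (-((k : ℚ) + 1)) + 1 = -(((2 * k + 1 : ℕ) : ℚ)) := by push_cast; ring
  have e3 : (1 : ℚ) * ((k : ℚ) + 1) + 1 = (((k + 1 : ℕ)) : ℚ) + 1 := by push_cast; ring
  have e4 : (2 : ℚ) * ((k : ℚ) + 1) + 1 = (((2 * k + 2 : ℕ)) : ℚ) + 1 := by push_cast; ring
  simp only [Qp, eval_sub, eval_add, eval_mul, eval_comp, eval_C, eval_X, e1, e2, e3, e4,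
    Fp_eval_neg', Fp_eval_pos' _ _ (by omega : 1 ≤ n), Fp_eval_pos' _ _ (by omega : 1 ≤ n + 1)]
  have g1 : ∑ j ∈ range (k + 1), ((j : ℚ) + 1) ^ (n + 1)
      = (∑ j ∈ range k, ((j : ℚ) + 1) ^ (n + 1)) + ((k : ℚ) + 1) ^ (n + 1) := by
    rw [Finset.sum_range_succ]
  have g2 : ∑ j ∈ range (2 * k + 2), ((j : ℚ) + 1) ^ (n + 1)
      = (∑ j ∈ range (2 * k + 1), ((j : ℚ) + 1) ^ (n + 1))
        + (2 * ((k : ℚ) + 1)) ^ (n + 1) := by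
    rw [Finset.sum_range_succ]
    push_cast
    rw [show ((2:ℚ) * (k:ℚ) + 1 + 1) = 2 * ((k:ℚ) + 1) from by ring]
  have g3 : ∑ j ∈ range (k + 1), ((j : ℚ) + 1) ^ n
      = (∑ j ∈ range k, ((j : ℚ) + 1) ^ n) + ((k : ℚ) + 1) ^ n := by
    rw [Finset.sum_range_succ]
  have g4 : ∑ j ∈ range (2 * k + 2), ((j : ℚ) + 1) ^ n
      = (∑ j ∈ range (2 * k + 1), ((j : ℚ) + 1) ^ n) + (2 * ((k : ℚ) + 1)) ^ n := by
    rw [Finset.sum_range_succ]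
    push_cast
    rw [show ((2:ℚ) * (k:ℚ) + 1 + 1) = 2 * ((k:ℚ) + 1) from by ring]
  rw [g1, g2, g3, g4]
  have hp1 : ((-1 : ℚ)) ^ (n + 1) = -(-1 : ℚ) ^ n := by rw [pow_succ]; ring
  have hp2 : (2 * ((k : ℚ) + 1)) ^ (n + 1) = 2 * ((k : ℚ) + 1) * (2 * ((k : ℚ) + 1)) ^ n := by
    rw [pow_succ]; ring
  have hp3 : ((k : ℚ) + 1) ^ (n + 1) = ((k : ℚ) + 1) * ((k : ℚ) + 1) ^ n := by
    rw [pow_succ]; ring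
  rw [hp1, hp2, hp3]
  ring

end AuxStmt11

open Finset in
theorem stmt_11 (n : ℕ) (hn : 1 ≤ n) :
    ∃ q : Polynomial ℚ, q.natDegree = n + 2 ∧
      (∀ k : ℕ, 0 < k → q.eval (k : ℚ) = powerSum n k) ∧
      q.comp (-Polynomial.X) = Polynomial.C ((-1 : ℚ) ^ n) * q := by
  refine ⟨Qp n, Qp_natDegree n hn, fun k _ => ?_, ?_⟩
  · rw [Qp_eval, sum_eq_powerSum n k hn]
  · apply Polynomial.eq_of_infinite_eval_eq
    apply Set.infinite_of_injective_forall_mem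
      (f := fun k : ℕ => ((k : ℚ) + 1))
    case hi =>
      intro a b hab
      simp only at hab
      exact_mod_cast (by linarith : ((a : ℚ)) = b)
    case hf =>
      intro k
      simp only [Set.mem_setOf_eq, eval_comp, eval_neg, eval_X, eval_mul, eval_C]
      rw [Qp_eval_neg n k hn]
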